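/- Let H be a real Hilbert space with obstacle map T and monotone Φ, and I(u) = ⟨u,u⟩ − Φ(T(u)). Then for any u ∈ H and any fixed point w = T(w): I(u) ≥ ⟨T(u),T(u)⟩ − Φ(T(u)), i.e. I(u) ≥ J(T(u)) where J(v) = ⟨v,v⟩ − Φ(v); in particular inf_H I = inf over fixed points of T of J. -/

import Mathlib

open scoped RealInnerProductSpace

/-- Abstract reduction: `I(u) ≥ J(T u)` for all `u`, hence the infimum of `I`
over `H` equals the infimum of `J` over the fixed points of `T`. -/
theorem reduction_to_fixed_points {H : Type*} [NormedAddCommGroup H]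
    [InnerProductSpace ℝ H] [CompleteSpace H]
    (le : H → H → Prop)
    (hrefl : ∀ u, le u u)
    (htrans : ∀ a b c, le a b → le b c → le a c)
    (T : H → H)
    (hTle : ∀ u, le u (T u))
    (hTmin : ∀ u v, le u v → ⟪T u, T u⟫ ≤ ⟪v, v⟫)
    (hTuniq : ∀ u v, le u v → ⟪v, v⟫ = ⟪T u, T u⟫ → v = T u)
    (hTidem : ∀ u, T (T u) = T u)
    (Φ : H → ℝ) (hΦ : ∀ u v, le u v → Φ u ≤ Φ v)
    (I J : H → ℝ)
    (hI : ∀ u, I u = ⟪u, u⟫ - Φ (T u))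
    (hJ : ∀ u, J u = ⟪u, u⟫ - Φ u) :
    (∀ u, J (T u) ≤ I u) ∧
      (⨅ u, I u) = ⨅ w : {w : H // T w = w}, J w := by
  have key : ∀ u, J (T u) ≤ I u := by
    intro u
    rw [hI, hJ]
    have := hTmin u u (hrefl u)
    linarith
  refine ⟨key, ?_⟩
  have hIJ : ∀ w : H, T w = w → I w = J w := by
    intro w hw
    rw [hI, hJ, hw]
  have hne : Nonempty {w : H // T w = w} := ⟨⟨T 0, hTidem 0⟩⟩
  by_cases hb : BddBelow (Set.range I)
  · -- both bounded
    have hb' : BddBelow (Set.range fun w : {w : H // T w = w} => J w) := by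
      obtain ⟨b, hbb⟩ := hb
      refine ⟨b, ?_⟩
      rintro x ⟨⟨w, hw⟩, rfl⟩
      have := hbb (Set.mem_range_self w)
      simpa [hIJ w hw] using this
    apply le_antisymm
    · apply le_ciInf
      rintro ⟨w, hw⟩
      calc (⨅ u, I u) ≤ I w := ciInf_le hb w
        _ = J w := hIJ w hw
    · apply le_ciInf
      intro u
      calc (⨅ w : {w : H // T w = w}, J w) ≤ J (T u) :=
            ciInf_le hb' ⟨T u, hTidem u⟩
        _ ≤ I u := key u
  · -- both unbounded
    have hb' : ¬ BddBelow (Set.range fun w : {w : H // T w = w} => J w) := by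
      intro ⟨b, hbb⟩
      apply hb
      refine ⟨b, ?_⟩
      rintro x ⟨u, rfl⟩
      have h1 : b ≤ J (T u) := hbb (Set.mem_range_self (⟨T u, hTidem u⟩ : {w : H // T w = w}))
      exact h1.trans (key u)
    rw [Real.iInf_of_not_bddBelow hb, Real.iInf_of_not_bddBelow hb']
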